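/- Let F₁ be the reflexive pattern on {r, g, b} whose only missing arc is (b, g). Let D be an F₁-arc-coloured multidigraph and let D̂ be the digraph obtained from D by: replacing any parallel pair containing an r-coloured arc from u to v by a single r-coloured arc; and replacing any parallel pair from u to v consisting of a g-arc and a b-arc by a single g-coloured arc (u,v) together with new vertices z₁, z₂ and arcs (u,z₁) coloured b, (z₁,z₂) coloured g, and (z₁,v) coloured b. Then for any two vertices x, y of D, there is an F₁-path from x to y in D if and only if there is an F₁-path from x to y in D̂. -/

import Mathlib

/-- The list of colours along a list of vertices, given an arc-colouring `c`. -/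
def colourList {α β : Type*} (c : β → β → α) : List β → List α
  | a :: b :: t => c a b :: colourList c (b :: t)
  | _ => []

/-- An `H`-walk in the `H`-arc-coloured digraph `(D, c)`: a directed walk with at least one
arc whose sequence of arc-colours is a directed walk in the pattern `H`. -/
def IsHWalk {α β : Type*} (H : α → α → Prop) (D : β → β → Prop) (c : β → β → α)
    (l : List β) : Prop :=
  2 ≤ l.length ∧ l.Chain' D ∧ (colourList c l).Chain' H

/-- An `H`-path: an `H`-walk whose vertices are pairwise distinct. -/
def IsHPath {α β : Type*} (H : α → α → Prop) (D : β → β → Prop) (c : β → β → α)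
    (l : List β) : Prop :=
  IsHWalk H D c l ∧ l.Nodup

/-- `u` reaches `v` by `H`-paths. -/
def HPathReach {α β : Type*} (H : α → α → Prop) (D : β → β → Prop) (c : β → β → α)
    (u v : β) : Prop :=
  ∃ l, IsHPath H D c l ∧ l.head? = some u ∧ l.getLast? = some v

/-- `u` reaches `v` by `H`-walks. -/
def HWalkReach {α β : Type*} (H : α → α → Prop) (D : β → β → Prop) (c : β → β → α)
    (u v : β) : Prop :=
  ∃ l, IsHWalk H D c l ∧ l.head? = some u ∧ l.getLast? = some v

/-- A digraph (binary relation) is loopless. -/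
def Loopless {β : Type*} (D : β → β → Prop) : Prop := ∀ v, ¬ D v v

/-- `S` is an independent set of the digraph `D` (no arc of `D` joins two of its vertices). -/
def Indep {β : Type*} (D : β → β → Prop) (S : Set β) : Prop :=
  ∀ u ∈ S, ∀ v ∈ S, ¬ D u v

/-- `S` is independent by `H`-paths. -/
def HIndep {α β : Type*} (H : α → α → Prop) (D : β → β → Prop) (c : β → β → α)
    (S : Set β) : Prop :=
  ∀ u ∈ S, ∀ v ∈ S, u ≠ v → ¬ HPathReach H D c u v

/-- `S` is absorbent by `H`-paths. -/
def HAbsorbent {α β : Type*} (H : α → α → Prop) (D : β → β → Prop) (c : β → β → α)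
    (S : Set β) : Prop :=
  ∀ u ∉ S, ∃ v ∈ S, HPathReach H D c u v

/-- An `H`-kernel: independent and absorbent by `H`-paths. -/
def HKernel {α β : Type*} (H : α → α → Prop) (D : β → β → Prop) (c : β → β → α)
    (S : Set β) : Prop :=
  HIndep H D c S ∧ HAbsorbent H D c S

/-- `S` is independent by `H`-walks. -/
def WIndep {α β : Type*} (H : α → α → Prop) (D : β → β → Prop) (c : β → β → α)
    (S : Set β) : Prop :=
  ∀ u ∈ S, ∀ v ∈ S, u ≠ v → ¬ HWalkReach H D c u v

/-- `S` is absorbent by `H`-walks. -/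
def WAbsorbent {α β : Type*} (H : α → α → Prop) (D : β → β → Prop) (c : β → β → α)
    (S : Set β) : Prop :=
  ∀ u ∉ S, ∃ v ∈ S, HWalkReach H D c u v

/-- A kernel by `H`-walks. -/
def WKernel {α β : Type*} (H : α → α → Prop) (D : β → β → Prop) (c : β → β → α)
    (S : Set β) : Prop :=
  WIndep H D c S ∧ WAbsorbent H D c S

/-- The complement of a pattern: `(u,v)` (with `u ≠ v`) is an arc iff it is not an arc of `H`. -/
def complRel {α : Type*} (H : α → α → Prop) : α → α → Prop :=
  fun u v => u ≠ v ∧ ¬ H u v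

/-- `G` contains a directed cycle of odd length. -/
def HasOddDicycle {α : Type*} (G : α → α → Prop) : Prop :=
  ∃ (x : α) (l : List α), (x :: l).Nodup ∧ Odd (x :: l).length ∧ (x :: l).Chain' G ∧
    G ((x :: l).getLast (List.cons_ne_nil x l)) x

/-- The list of arcs (consecutive pairs) of a list of vertices. -/
def arcsOf {β : Type*} (l : List β) : List (β × β) := l.zip l.tail


/-- The three colours of the pattern `F₁`. -/
inductive F1V : Type
  | r | g | b
deriving DecidableEq

/-- The pattern `F₁` on `{r, g, b}`: all loops and all arcs except `(b, g)`. -/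
def F1 : F1V → F1V → Prop := fun a b => ¬ (a = F1V.b ∧ b = F1V.g)

/-- The vertex list of a list of arcs of a multidigraph. -/
def mVerts {β E : Type} (src tgt : E → β) : List E → List β
  | [] => []
  | e :: t => src e :: (e :: t).map tgt

/-- An `H`-path in an arc-coloured multidigraph given by source, target and colour maps:
a nonempty list of composable arcs visiting pairwise distinct vertices, whose colour
sequence is a directed walk in `H`. -/
def IsMPath {α β E : Type} (H : α → α → Prop) (src tgt : E → β) (col : E → α)
    (l : List E) : Prop :=
  l ≠ [] ∧ (mVerts src tgt l).Nodup ∧ l.Chain' (fun e f => tgt e = src f) ∧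
    (l.map col).Chain' H

/-- `u` reaches `v` by `H`-paths in the multidigraph. -/
def MReach {α β E : Type} (H : α → α → Prop) (src tgt : E → β) (col : E → α)
    (u v : β) : Prop :=
  ∃ l, IsMPath H src tgt col l ∧ l.head?.map src = some u ∧ l.getLast?.map tgt = some v

/-- An `H`-kernel of an arc-coloured multidigraph. -/
def MKernel {α β E : Type} (H : α → α → Prop) (src tgt : E → β) (col : E → α)
    (K : Set β) : Prop :=
  (∀ u ∈ K, ∀ v ∈ K, u ≠ v → ¬ MReach H src tgt col u v) ∧
    (∀ u ∉ K, ∃ v ∈ K, MReach H src tgt col u v)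

/-- There is an arc from `u` to `v` coloured `x` in the multidigraph. -/
def hasCol {β E : Type} (src tgt : E → β) (col : E → F1V) (x : F1V) (u v : β) : Prop :=
  ∃ e, src e = u ∧ tgt e = v ∧ col e = x

/-- The pair `(u,v)` carries a `g`-arc and a `b`-arc but no `r`-arc, so the construction
of `D̂` attaches the gadget with new vertices `z₁(u,v)`, `z₂(u,v)`. -/
def needZ {β E : Type} (src tgt : E → β) (col : E → F1V) (u v : β) : Prop :=
  ¬ hasCol src tgt col F1V.r u v ∧ hasCol src tgt col F1V.g u v ∧
    hasCol src tgt col F1V.b u v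

/-- The vertex set of `D̂`: the original vertices, the vertices `z₁(u,v)` (left copies of
pairs) and the vertices `z₂(u,v)` (right copies of pairs). -/
abbrev VHat (β : Type) : Type := β ⊕ ((β × β) ⊕ (β × β))

/-- The arcs of the simple digraph `D̂`: between original vertices, a single arc whenever
some arc was present; for each pair needing the gadget, the arcs `u → z₁`, `z₁ → z₂` and
`z₁ → v`. -/
def Dhat {β E : Type} (src tgt : E → β) (col : E → F1V) : VHat β → VHat β → Prop
  | .inl u, .inl v =>
      hasCol src tgt col F1V.r u v ∨ hasCol src tgt col F1V.g u v ∨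
        hasCol src tgt col F1V.b u v
  | .inl u, .inr (.inl p) => u = p.1 ∧ needZ src tgt col p.1 p.2
  | .inr (.inl p), .inr (.inr q) => p = q ∧ needZ src tgt col p.1 p.2
  | .inr (.inl p), .inl w => w = p.2 ∧ needZ src tgt col p.1 p.2
  | _, _ => False

open Classical in
/-- The colouring of `D̂`: `r` if an `r`-arc was present, else `g` if a `g`-arc was
present, else `b`; the gadget arcs `u → z₁`, `z₁ → z₂`, `z₁ → v` are coloured `b`, `g`,
`b` respectively. -/
noncomputable def chat {β E : Type} (src tgt : E → β) (col : E → F1V) :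
    VHat β → VHat β → F1V
  | .inl u, .inl v =>
      if hasCol src tgt col F1V.r u v then F1V.r
      else if hasCol src tgt col F1V.g u v then F1V.g
      else F1V.b
  | .inl _, .inr (.inl _) => F1V.b
  | .inr (.inl _), .inr (.inr _) => F1V.g
  | .inr (.inl _), .inl _ => F1V.b
  | _, _ => F1V.r


namespace Stmt15Aux

open List

variable {β E : Type}

/-- Projection of a `D̂` vertex to an original vertex. -/
def proj : VHat β → Option β := Sum.elim some (fun _ => none)

lemma mem_of_mem_filterMap_proj {L : List (VHat β)} {u : β}
    (h : u ∈ L.filterMap proj) : Sum.inl u ∈ L := by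
  rcases List.mem_filterMap.1 h with ⟨w, hw, hp⟩
  cases w with
  | inl a => cases hp; exact hw
  | inr b => simp [proj] at hp

lemma mem_filterMap_proj {L : List (VHat β)} {u : β}
    (h : Sum.inl u ∈ L) : u ∈ L.filterMap proj :=
  List.mem_filterMap.2 ⟨Sum.inl u, h, rfl⟩

lemma F1_left_r (c : F1V) : F1 F1V.r c := by simp [F1]
lemma F1_left_g (c : F1V) : F1 F1V.g c := by simp [F1]
lemma F1_right_r (c : F1V) : F1 c F1V.r := by simp [F1]
lemma F1_right_b (c : F1V) : F1 c F1V.b := by simp [F1]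

variable (src tgt : E → β) (col : E → F1V)

lemma hasCol_of_edge (e : E) : hasCol src tgt col (col e) (src e) (tgt e) :=
  ⟨e, rfl, rfl, rfl⟩

open Classical in
lemma chat_inl_inl (u v : β) : chat src tgt col (Sum.inl u) (Sum.inl v) =
    if hasCol src tgt col F1V.r u v then F1V.r
    else if hasCol src tgt col F1V.g u v then F1V.g
    else F1V.b := rfl

lemma chat_z1_left (u : β) (p : β × β) :
    chat src tgt col (Sum.inl u) (Sum.inr (Sum.inl p)) = F1V.b := rfl

lemma chat_z1_right (p : β × β) (w : β) :
    chat src tgt col (Sum.inr (Sum.inl p)) (Sum.inl w) = F1V.b := rfl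

lemma Dhat_inl_inl (u v : β) : Dhat src tgt col (Sum.inl u) (Sum.inl v) ↔
    (hasCol src tgt col F1V.r u v ∨ hasCol src tgt col F1V.g u v ∨
      hasCol src tgt col F1V.b u v) := Iff.rfl

lemma Dhat_of_edge (e : E) : Dhat src tgt col (Sum.inl (src e)) (Sum.inl (tgt e)) := by
  rw [Dhat_inl_inl]
  have h := hasCol_of_edge src tgt col e
  cases hc : col e <;> rw [hc] at h
  · exact Or.inl h
  · exact Or.inr (Or.inl h)
  · exact Or.inr (Or.inr h)

lemma exists_edge {u v : β} (h : Dhat src tgt col (Sum.inl u) (Sum.inl v)) :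
    ∃ e, src e = u ∧ tgt e = v ∧ col e = chat src tgt col (Sum.inl u) (Sum.inl v) := by
  rw [Dhat_inl_inl] at h
  rw [chat_inl_inl]
  by_cases hr : hasCol src tgt col F1V.r u v
  · obtain ⟨e, h1, h2, h3⟩ := id hr
    exact ⟨e, h1, h2, by rw [if_pos hr]; exact h3⟩
  · by_cases hg : hasCol src tgt col F1V.g u v
    · obtain ⟨e, h1, h2, h3⟩ := id hg
      exact ⟨e, h1, h2, by rw [if_neg hr, if_pos hg]; exact h3⟩
    · have hb : hasCol src tgt col F1V.b u v := by tauto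
      obtain ⟨e, h1, h2, h3⟩ := hb
      exact ⟨e, h1, h2, by rw [if_neg hr, if_neg hg]; exact h3⟩

/-- If the edge is not routed through the gadget, its `chat` colour is at least as
permissive on the left. -/
lemma F1_left_chat {e : E} (hng : ¬ (col e = F1V.b ∧ needZ src tgt col (src e) (tgt e)))
    (X : F1V) (hX : F1 X (col e)) :
    F1 X (chat src tgt col (Sum.inl (src e)) (Sum.inl (tgt e))) := by
  rw [chat_inl_inl]
  by_cases hr : hasCol src tgt col F1V.r (src e) (tgt e)
  · rw [if_pos hr]; exact F1_right_r X
  · by_cases hg : hasCol src tgt col F1V.g (src e) (tgt e)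
    · rw [if_neg hr, if_pos hg]
      cases hc : col e with
      | r => exact absurd (hc ▸ hasCol_of_edge src tgt col e) hr
      | g => exact hc ▸ hX
      | b => exact absurd ⟨hc, hr, hg, hc ▸ hasCol_of_edge src tgt col e⟩ hng
    · rw [if_neg hr, if_neg hg]; exact F1_right_b X

/-- The `chat` colour of an edge pair is at least as permissive on the right. -/
lemma F1_chat_right {e : E} (Y : F1V) (hY : F1 (col e) Y) :
    F1 (chat src tgt col (Sum.inl (src e)) (Sum.inl (tgt e))) Y := by
  rw [chat_inl_inl]
  by_cases hr : hasCol src tgt col F1V.r (src e) (tgt e)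
  · rw [if_pos hr]; exact F1_left_r Y
  · by_cases hg : hasCol src tgt col F1V.g (src e) (tgt e)
    · rw [if_neg hr, if_pos hg]; exact F1_left_g Y
    · rw [if_neg hr, if_neg hg]
      cases hc : col e with
      | r => exact absurd (hc ▸ hasCol_of_edge src tgt col e) hr
      | g => exact absurd (hc ▸ hasCol_of_edge src tgt col e) hg
      | b => exact hc ▸ hY

lemma mVerts_cons (e : E) (t : List E) :
    mVerts src tgt (e :: t) = src e :: (e :: t).map tgt := rfl

lemma mVerts_cons_cons (e f : E) (t : List E) (h : tgt e = src f) :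
    mVerts src tgt (e :: f :: t) = src e :: mVerts src tgt (f :: t) := by
  simp [mVerts_cons, h]

lemma colourList_cons_cons {α γ : Type*} (c : γ → γ → α) (a b : γ) (t : List γ) :
    colourList c (a :: b :: t) = c a b :: colourList c (b :: t) := rfl

/-- Forward translation: an `F₁`-path in `D` yields one in `D̂`. -/
lemma fwd_aux (hl : ∀ e, src e ≠ tgt e) :
    ∀ (l : List E) (e : E),
      (mVerts src tgt (e :: l)).Nodup →
      (e :: l).Chain' (fun a b => tgt a = src b) →
      ((e :: l).map col).Chain' F1 →
      ∃ L : List (VHat β),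
        2 ≤ L.length ∧
        L.Chain' (Dhat src tgt col) ∧
        (colourList (chat src tgt col) L).Chain' F1 ∧
        L.Nodup ∧
        L.head? = some (Sum.inl (src e)) ∧
        (∀ f, (e :: l).getLast? = some f → L.getLast? = some (Sum.inl (tgt f))) ∧
        L.filterMap proj = mVerts src tgt (e :: l) ∧
        (∀ p : β × β, Sum.inr (Sum.inl p) ∈ L → p.1 ∈ mVerts src tgt (e :: l)) ∧
        (∀ q : β × β, (Sum.inr (Sum.inr q) : VHat β) ∉ L) ∧
        (∀ X c, F1 X (col e) → (colourList (chat src tgt col) L).head? = some c → F1 X c)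
  | [], e => by
    intro hnd _ _
    have huv : src e ≠ tgt e := hl e
    by_cases hz : col e = F1V.b ∧ needZ src tgt col (src e) (tgt e)
    · -- gadget
      refine ⟨[Sum.inl (src e), Sum.inr (Sum.inl (src e, tgt e)), Sum.inl (tgt e)],
        by simp, ?_, ?_, ?_, rfl, ?_, ?_, ?_, ?_, ?_⟩
      · refine List.isChain_cons_cons.2 ⟨⟨rfl, hz.2⟩, List.isChain_cons_cons.2 ⟨⟨rfl, hz.2⟩, List.isChain_singleton _⟩⟩
      · simp only [colourList_cons_cons, chat_z1_left, chat_z1_right]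
        exact List.isChain_cons_cons.2 ⟨F1_right_b _, List.isChain_singleton _⟩
      · simp [huv]
      · intro f hf; simp at hf; subst hf; rfl
      · simp [proj, mVerts_cons]; rfl
      · intro p hp
        simp at hp
        rw [Prod.ext_iff] at hp
        simp [mVerts_cons, hp.1]
      · simp
      · intro X c _ hc
        simp only [colourList_cons_cons, chat_z1_left] at hc
        cases hc
        exact F1_right_b X
    · refine ⟨[Sum.inl (src e), Sum.inl (tgt e)], by simp, ?_, ?_, ?_, rfl, ?_, ?_, ?_, ?_, ?_⟩
      · exact List.isChain_cons_cons.2 ⟨Dhat_of_edge src tgt col e, List.isChain_singleton _⟩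
      · exact List.isChain_singleton _
      · simp [huv]
      · intro f hf; simp at hf; subst hf; rfl
      · simp [proj, mVerts_cons]
      · simp
      · simp
      · intro X c hX hc
        simp only [colourList_cons_cons] at hc
        cases hc
        exact F1_left_chat src tgt col hz X hX
  | e' :: t, e => by
    intro hnd hch hcol
    simp only [List.map_cons] at hcol
    have hte : tgt e = src e' := (List.isChain_cons_cons.1 hch).1
    rw [mVerts_cons_cons src tgt e e' t hte] at hnd
    have hsrc_not : src e ∉ mVerts src tgt (e' :: t) := (List.nodup_cons.1 hnd).1
    have hnd' : (mVerts src tgt (e' :: t)).Nodup := (List.nodup_cons.1 hnd).2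
    have hch' := (List.isChain_cons_cons.1 hch).2
    have hcolF : F1 (col e) (col e') := (List.isChain_cons_cons.1 hcol).1
    have hcol' : ((e' :: t).map col).Chain' F1 := by
      simp only [List.map_cons]
      exact (List.isChain_cons_cons.1 hcol).2
    obtain ⟨L', hlen', hD', hF', hnd2, hhead', hlast', hproj', hz1', hz2', hheadcol'⟩ :=
      fwd_aux hl t e' hnd' hch' hcol'
    obtain ⟨w, T1, rfl⟩ : ∃ w T1, L' = w :: T1 := by
      cases L' with
      | nil => simp at hhead'
      | cons a b => exact ⟨a, b, rfl⟩
    have hw : w = Sum.inl (src e') := by simpa using hhead'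
    subst hw
    have hmem_srce : (Sum.inl (src e) : VHat β) ∉ (Sum.inl (src e') :: T1 : List (VHat β)) := by
      intro hmem
      exact hsrc_not (hproj' ▸ mem_filterMap_proj hmem)
    by_cases hz : col e = F1V.b ∧ needZ src tgt col (src e) (tgt e)
    · refine ⟨Sum.inl (src e) :: Sum.inr (Sum.inl (src e, tgt e)) :: Sum.inl (src e') :: T1,
        by simp, ?_, ?_, ?_, rfl, ?_, ?_, ?_, ?_, ?_⟩
      · exact List.isChain_cons_cons.2 ⟨⟨rfl, hz.2⟩, List.isChain_cons_cons.2 ⟨⟨hte.symm, hz.2⟩, hD'⟩⟩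
      · rw [colourList_cons_cons, colourList_cons_cons, chat_z1_left, chat_z1_right]
        refine List.isChain_cons_cons.2 ⟨by simp [F1], List.isChain_cons.2 ⟨?_, hF'⟩⟩
        intro c hc
        exact hheadcol' F1V.b c (hz.1 ▸ hcolF) hc
      · refine List.nodup_cons.2 ⟨?_, List.nodup_cons.2 ⟨?_, hnd2⟩⟩
        · intro hmem
          rcases List.mem_cons.1 hmem with h | h
          · exact absurd h (by simp)
          · exact hmem_srce h
        · intro hmem
          exact hsrc_not (hz1' (src e, tgt e) hmem)
      · intro f hf
        rw [List.getLast?_cons_cons] at hf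
        rw [List.getLast?_cons_cons, List.getLast?_cons_cons]
        exact hlast' f hf
      · rw [mVerts_cons_cons src tgt e e' t hte, ← hproj']
        simp [proj]; rfl
      · intro p hp
        rw [mVerts_cons_cons src tgt e e' t hte]
        rcases List.mem_cons.1 hp with h | hp
        · exact absurd h (by simp)
        · rcases List.mem_cons.1 hp with h | hp
          · have hpe : p = (src e, tgt e) := by simpa using h
            subst hpe
            exact List.mem_cons_self
          · exact List.mem_cons_of_mem _ (hz1' p hp)
      · intro q hq
        rcases List.mem_cons.1 hq with h | hq
        · exact absurd h (by simp)
        · rcases List.mem_cons.1 hq with h | hq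
          · exact absurd h (by simp)
          · exact hz2' q hq
      · intro X c _ hc
        rw [colourList_cons_cons, chat_z1_left] at hc
        cases hc
        exact F1_right_b X
    · refine ⟨Sum.inl (src e) :: Sum.inl (src e') :: T1, by simp, ?_, ?_, ?_, rfl, ?_, ?_, ?_, ?_, ?_⟩
      · exact List.isChain_cons_cons.2 ⟨hte ▸ Dhat_of_edge src tgt col e, hD'⟩
      · rw [colourList_cons_cons]
        refine List.isChain_cons.2 ⟨?_, hF'⟩
        intro c hc
        refine hheadcol' _ c ?_ hc
        have h2 := F1_chat_right src tgt col (e := e) (col e') hcolF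
        rwa [hte] at h2
      · exact List.nodup_cons.2 ⟨hmem_srce, hnd2⟩
      · intro f hf
        rw [List.getLast?_cons_cons] at hf
        rw [List.getLast?_cons_cons]
        exact hlast' f hf
      · rw [mVerts_cons_cons src tgt e e' t hte, ← hproj']
        simp [proj]
      · intro p hp
        rw [mVerts_cons_cons src tgt e e' t hte]
        rcases List.mem_cons.1 hp with h | hp
        · exact absurd h (by simp)
        · exact List.mem_cons_of_mem _ (hz1' p hp)
      · intro q hq
        rcases List.mem_cons.1 hq with h | hq
        · exact absurd h (by simp)
        · exact hz2' q hq
      · intro X c hX hc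
        rw [colourList_cons_cons] at hc
        cases hc
        have h2 := F1_left_chat src tgt col hz X hX
        rwa [hte] at h2

/-- Backward translation: an `F₁`-path in `D̂` between original vertices yields one in `D`. -/
lemma bwd_aux (hl : ∀ e, src e ≠ tgt e) :
    ∀ (n : ℕ) (L : List (VHat β)) (u : β),
      L.length ≤ n →
      L.Chain' (Dhat src tgt col) →
      (colourList (chat src tgt col) L).Chain' F1 →
      L.Nodup →
      L.head? = some (Sum.inl u) →
      2 ≤ L.length →
      ∀ v : β, L.getLast? = some (Sum.inl v) →
      ∃ l : List E, l ≠ [] ∧ (mVerts src tgt l).Nodup ∧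
        l.Chain' (fun a b => tgt a = src b) ∧ (l.map col).Chain' F1 ∧
        l.head?.map src = some u ∧ l.getLast?.map tgt = some v ∧
        mVerts src tgt l = L.filterMap proj ∧
        (l.map col).head? = (colourList (chat src tgt col) L).head? := by
  intro n
  induction n with
  | zero => intro L u hn _ _ _ _ h2 _ _; omega
  | succ n ih =>
    intro L u hn hD hF hnd hhead h2 v hlast
    obtain ⟨w0, T, rfl⟩ : ∃ w0 T, L = w0 :: T := by
      cases L with
      | nil => simp at hhead
      | cons a b => exact ⟨a, b, rfl⟩
    have hw0 : w0 = Sum.inl u := by simpa using hhead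
    subst hw0
    obtain ⟨w, T2, rfl⟩ : ∃ w T2, T = w :: T2 := by
      cases T with
      | nil => simp at h2
      | cons a b => exact ⟨a, b, rfl⟩
    have hDuw : Dhat src tgt col (Sum.inl u) w := (List.isChain_cons_cons.1 hD).1
    have hD' : (w :: T2).Chain' (Dhat src tgt col) := (List.isChain_cons_cons.1 hD).2
    rcases w with w1 | p | q
    · -- next vertex is an original vertex
      obtain ⟨e, he1, he2, he3⟩ := exists_edge src tgt col hDuw
      rcases T2 with _ | ⟨w2, T3⟩
      · -- two-vertex path
        have hv : w1 = v := by simpa using hlast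
        have huv : u ≠ w1 := by
          intro h; subst h; simp at hnd
        refine ⟨[e], by simp, by simp [mVerts, he1, he2, huv], List.isChain_singleton _, List.isChain_singleton _,
          by simp [he1], by simp [he2, hv], by simp [mVerts, proj, he1, he2], ?_⟩
        simp [colourList_cons_cons, he3]
      · -- longer path: recurse
        rw [colourList_cons_cons] at hF
        have hF2 : (colourList (chat src tgt col) (Sum.inl w1 :: w2 :: T3)).Chain' F1 :=
          (List.isChain_cons.1 hF).2
        have hlink := (List.isChain_cons.1 hF).1
        have hlen2 : (Sum.inl w1 :: w2 :: T3 : List (VHat β)).length ≤ n := by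
          simp at hn ⊢; omega
        have hlast2 : (Sum.inl w1 :: w2 :: T3 : List (VHat β)).getLast? = some (Sum.inl v) := by
          rwa [List.getLast?_cons_cons] at hlast
        obtain ⟨l', hne', hndm', hch', hcol', hhd', hlst', hproj', hcolhead'⟩ :=
          ih (Sum.inl w1 :: w2 :: T3) w1 hlen2 hD' hF2 ((List.nodup_cons.1 hnd).2) rfl
            (by simp) v hlast2
        obtain ⟨f, t', rfl⟩ : ∃ f t', l' = f :: t' := by
          cases l' with
          | nil => simp at hne'
          | cons a b => exact ⟨a, b, rfl⟩
        have hsf : src f = w1 := by simpa using hhd'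
        have hts : tgt e = src f := by rw [he2, hsf]
        have hu_not : u ∉ mVerts src tgt (f :: t') := by
          intro hmem
          rw [hproj'] at hmem
          have hm2 := mem_of_mem_filterMap_proj hmem
          exact (List.nodup_cons.1 hnd).1 hm2
        refine ⟨e :: f :: t', by simp, ?_, List.isChain_cons_cons.2 ⟨hts, hch'⟩, ?_, by simp [he1],
          ?_, ?_, ?_⟩
        · rw [mVerts_cons_cons src tgt e f t' hts, List.nodup_cons, he1]
          exact ⟨hu_not, hndm'⟩
        · simp only [List.map_cons]
          refine List.isChain_cons.2 ⟨?_, hcol'⟩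
          intro c hc
          have hc2 : ((f :: t').map col).head? = some c := by simpa using hc
          rw [hcolhead'] at hc2
          exact he3 ▸ hlink c hc2
        · rw [List.getLast?_cons_cons]
          exact hlst'
        · rw [mVerts_cons_cons src tgt e f t' hts, hproj', he1]
          simp [proj]
        · simp only [List.map_cons, List.head?_cons, colourList_cons_cons, he3]
    · -- next vertex is a gadget vertex z₁
      have hDuw' : u = p.1 ∧ needZ src tgt col p.1 p.2 := hDuw
      obtain ⟨hup, hz⟩ := hDuw'
      obtain ⟨e, he1, he2, he3⟩ := hz.2.2
      rcases T2 with _ | ⟨w2, T3⟩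
      · simp at hlast
      · have hD2 : Dhat src tgt col (Sum.inr (Sum.inl p)) w2 := (List.isChain_cons_cons.1 hD').1
        have hD3 : (w2 :: T3).Chain' (Dhat src tgt col) := (List.isChain_cons_cons.1 hD').2
        rcases w2 with w1 | p' | q'
        · -- gadget exit to an original vertex
          have hD2' : w1 = p.2 ∧ needZ src tgt col p.1 p.2 := hD2
          have hw1 : w1 = p.2 := hD2'.1
          have hse : src e = u := by rw [he1, hup]
          have hte : tgt e = w1 := by rw [he2, hw1]
          rcases T3 with _ | ⟨w3, T4⟩
          · -- ends right after the gadget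
            have hv : w1 = v := by simpa using hlast
            have huv : u ≠ w1 := by rw [← hse, ← hte]; exact hl e
            refine ⟨[e], by simp, by simp [mVerts, hse, hte, huv], List.isChain_singleton _, List.isChain_singleton _,
              by simp [hse], by simp [hte, hv], by simp [mVerts, proj, hse, hte]; rfl, ?_⟩
            simp [colourList_cons_cons, chat_z1_left, he3]
          · -- recurse past the gadget
            rw [colourList_cons_cons, colourList_cons_cons, chat_z1_left, chat_z1_right] at hF
            have hF2 : (colourList (chat src tgt col) (Sum.inl w1 :: w3 :: T4)).Chain' F1 :=
              (List.isChain_cons.1 (List.isChain_cons_cons.1 hF).2).2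
            have hlink := (List.isChain_cons.1 (List.isChain_cons_cons.1 hF).2).1
            have hlen2 : (Sum.inl w1 :: w3 :: T4 : List (VHat β)).length ≤ n := by
              simp at hn ⊢; omega
            have hlast2 : (Sum.inl w1 :: w3 :: T4 : List (VHat β)).getLast? =
                some (Sum.inl v) := by
              rwa [List.getLast?_cons_cons, List.getLast?_cons_cons] at hlast
            obtain ⟨l', hne', hndm', hch', hcol', hhd', hlst', hproj', hcolhead'⟩ :=
              ih (Sum.inl w1 :: w3 :: T4) w1 hlen2 hD3 hF2
                ((List.nodup_cons.1 (List.nodup_cons.1 hnd).2).2) rfl (by simp) v hlast2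
            obtain ⟨f, t', rfl⟩ : ∃ f t', l' = f :: t' := by
              cases l' with
              | nil => simp at hne'
              | cons a b => exact ⟨a, b, rfl⟩
            have hsf : src f = w1 := by simpa using hhd'
            have hts : tgt e = src f := by rw [hte, hsf]
            have hu_not : u ∉ mVerts src tgt (f :: t') := by
              intro hmem
              rw [hproj'] at hmem
              have hm2 := mem_of_mem_filterMap_proj hmem
              exact (List.nodup_cons.1 hnd).1 (List.mem_cons_of_mem _ hm2)
            refine ⟨e :: f :: t', by simp, ?_, List.isChain_cons_cons.2 ⟨hts, hch'⟩, ?_,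
              by simp [hse], ?_, ?_, ?_⟩
            · rw [mVerts_cons_cons src tgt e f t' hts, List.nodup_cons, hse]
              exact ⟨hu_not, hndm'⟩
            · simp only [List.map_cons]
              refine List.isChain_cons.2 ⟨?_, hcol'⟩
              intro c hc
              have hc2 : ((f :: t').map col).head? = some c := by simpa using hc
              rw [hcolhead'] at hc2
              exact he3 ▸ hlink c hc2
            · rw [List.getLast?_cons_cons]
              exact hlst'
            · rw [mVerts_cons_cons src tgt e f t' hts, hproj', hse]
              simp [proj]; rfl
            · simp only [List.map_cons, List.head?_cons, colourList_cons_cons, he3,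
                chat_z1_left]
        · exact hD2.elim
        · -- gadget exit to z₂: path would be stuck
          rcases T3 with _ | ⟨w3, T4⟩
          · simp at hlast
          · exact ((List.isChain_cons_cons.1 hD3).1).elim
    · exact hDuw.elim


end Stmt15Aux

/-- For any two original vertices `x, y` of the `F₁`-arc-coloured
multidigraph `D`, there is an `F₁`-path from `x` to `y` in `D` iff there is one from `x`
to `y` in the digraph `D̂`. -/
theorem stmt15 {β E : Type} (src tgt : E → β) (col : E → F1V)
    (hl : ∀ e, src e ≠ tgt e) :
    ∀ x y : β, MReach F1 src tgt col x y ↔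
      HPathReach F1 (Dhat src tgt col) (chat src tgt col) (Sum.inl x) (Sum.inl y) := by
  intro x y
  constructor
  · rintro ⟨l, ⟨hne, hnd, hch, hcol⟩, hhd, hlst⟩
    obtain ⟨e, t, rfl⟩ : ∃ e t, l = e :: t := by
      cases l with
      | nil => simp at hne
      | cons a b => exact ⟨a, b, rfl⟩
    have hsrc : src e = x := by simpa using hhd
    obtain ⟨f, hf⟩ : ∃ f, (e :: t).getLast? = some f :=
      ⟨_, List.getLast?_eq_getLast (List.cons_ne_nil e t)⟩
    have hy : tgt f = y := by
      rw [hf] at hlst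
      simpa using hlst
    obtain ⟨L, hlen, hD, hF, hndL, hhead, hlast', _, _, _, _⟩ :=
      Stmt15Aux.fwd_aux src tgt col hl t e hnd hch hcol
    exact ⟨L, ⟨⟨hlen, hD, hF⟩, hndL⟩, by rw [hhead, hsrc], by rw [hlast' f hf, hy]⟩
  · rintro ⟨L, ⟨⟨h2, hD, hF⟩, hndL⟩, hh, hlst⟩
    obtain ⟨l, hne, hndm, hch, hcol, hhd, hlast, _, _⟩ :=
      Stmt15Aux.bwd_aux src tgt col hl L.length L x le_rfl hD hF hndL hh h2 y hlst
    exact ⟨l, ⟨hne, hndm, hch, hcol⟩, hhd, hlast⟩
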